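/- Let A be a discrete set in ℝ^p such that for every continuous function φ : ℝ^p → ℝ with compact support, the function x ↦ ∑_{a ∈ A} φ(x + a) is Bohr almost periodic on ℝ^p. If moreover the difference set A − A is discrete, then there exist a full rank lattice L ⊆ ℝ^p and a finite set F ⊆ ℝ^p such that A = L + F. -/

import Mathlib

open Pointwise

noncomputable section

/-- A set `S ⊆ ℝ^p` is relatively dense if there is `R` such that every ball of
radius `R` contains a point of `S`. -/
def RelativelyDense {p : ℕ} (S : Set (EuclideanSpace ℝ (Fin p))) : Prop :=
  ∃ R : ℝ, ∀ x : EuclideanSpace ℝ (Fin p), ∃ s ∈ S, dist x s ≤ R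

/-- A set `A ⊆ ℝ^p` is discrete: closed with finite intersection with every compact set. -/
def DiscreteSet {p : ℕ} (A : Set (EuclideanSpace ℝ (Fin p))) : Prop :=
  IsClosed A ∧ ∀ K : Set (EuclideanSpace ℝ (Fin p)), IsCompact K → (A ∩ K).Finite

/-- `τ` is an `ε`-almost period of `A`: there is a bijection `σ : A → A` with
`|a + τ - σ a| < ε` for all `a ∈ A`. -/
def IsAlmostPeriodOf {p : ℕ} (A : Set (EuclideanSpace ℝ (Fin p))) (ε : ℝ)
    (τ : EuclideanSpace ℝ (Fin p)) : Prop :=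
  ∃ σ : A ≃ A, ∀ a : A,
    ‖(a : EuclideanSpace ℝ (Fin p)) + τ - (σ a : EuclideanSpace ℝ (Fin p))‖ < ε

/-- `A` is an almost periodic set: for every `ε > 0` its set of `ε`-almost periods is
relatively dense. -/
def AlmostPeriodicSet {p : ℕ} (A : Set (EuclideanSpace ℝ (Fin p))) : Prop :=
  ∀ ε : ℝ, 0 < ε → RelativelyDense {τ | IsAlmostPeriodOf A ε τ}

/-- `L` is a full rank lattice: the set of integer linear combinations of `p` linearly
independent vectors of `ℝ^p`. -/
def IsFullRankLattice {p : ℕ} (L : Set (EuclideanSpace ℝ (Fin p))) : Prop :=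
  ∃ T : Fin p → EuclideanSpace ℝ (Fin p), LinearIndependent ℝ T ∧
    L = {x | ∃ n : Fin p → ℤ, x = ∑ i, (n i : ℝ) • T i}

/-- `f` is Bohr almost periodic: `f` is continuous and for every `ε > 0` the set of
`τ` with `|f (x + τ) - f x| < ε` for all `x` is relatively dense. -/
def BohrAlmostPeriodic {p : ℕ} (f : EuclideanSpace ℝ (Fin p) → ℝ) : Prop :=
  Continuous f ∧ ∀ ε : ℝ, 0 < ε →
    RelativelyDense {τ | ∀ x : EuclideanSpace ℝ (Fin p), |f (x + τ) - f x| < ε}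

section AuxCrystal

open Function

variable {p : ℕ}

def tent (p : ℕ) (s : ℝ) (y : EuclideanSpace ℝ (Fin p)) : ℝ := max 0 (1 - ‖y‖/s)

lemma tent_nonneg {s : ℝ} {y : EuclideanSpace ℝ (Fin p)} : 0 ≤ tent p s y := le_max_left _ _

lemma tent_zero {s : ℝ} : tent p s 0 = 1 := by simp [tent]

lemma tent_norm_lt {s : ℝ} (hs : 0 < s) {y : EuclideanSpace ℝ (Fin p)} {ε : ℝ} (hε : ε ≤ 1)
    (h : 1 - ε < tent p s y) : ‖y‖ < s * ε := by
  have h2 : 1 - ε < 1 - ‖y‖/s := by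
    rcases max_cases (0:ℝ) (1 - ‖y‖/s) with ⟨he, _⟩ | ⟨he, _⟩ <;> rw [tent, he] at h <;> linarith
  have : ‖y‖/s < ε := by linarith
  calc ‖y‖ = ‖y‖/s * s := by field_simp
  _ < ε * s := by exact mul_lt_mul_of_pos_right this hs
  _ = s * ε := mul_comm _ _

lemma tent_support {s : ℝ} (hs : 0 < s) {y : EuclideanSpace ℝ (Fin p)} (h : tent p s y ≠ 0) :
    ‖y‖ < s := by
  have := tent_norm_lt hs (le_refl 1) (by
    rcases (lt_or_eq_of_le (tent_nonneg (y := y) (s := s))) with h' | h'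
    · linarith [h']
    · exact absurd h'.symm h)
  simpa using this

lemma tent_continuous {s : ℝ} : Continuous (tent p s) := by
  unfold tent; fun_prop

lemma tent_hcs {s : ℝ} (hs : 0 < s) : HasCompactSupport (tent p s) := by
  apply HasCompactSupport.intro (isCompact_closedBall (0 : EuclideanSpace ℝ (Fin p)) s)
  intro y hy
  simp only [Metric.mem_closedBall, dist_zero_right, not_le] at hy
  have : 1 - ‖y‖/s < 0 := by
    rw [sub_neg, lt_div_iff₀ hs]; nlinarith
  simp [tent, max_eq_left this.le]

lemma sum_support_finite (A : Set (EuclideanSpace ℝ (Fin p)))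
    (hA : ∀ K : Set (EuclideanSpace ℝ (Fin p)), IsCompact K → (A ∩ K).Finite)
    {s : ℝ} (hs : 0 < s) (x : EuclideanSpace ℝ (Fin p)) :
    (A ∩ Function.support (fun a => tent p s (x + a))).Finite := by
  refine ((hA (Metric.closedBall (-x) s) (isCompact_closedBall _ _)).subset ?_)
  rintro a ⟨haA, ha⟩
  refine ⟨haA, ?_⟩
  have := tent_support hs ha
  simp only [Metric.mem_closedBall, dist_eq_norm]
  have : ‖a - -x‖ = ‖x + a‖ := by rw [sub_neg_eq_add, add_comm]
  linarith [tent_support hs ha, this.le]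

lemma sum_dichotomy (A : Set (EuclideanSpace ℝ (Fin p)))
    (hA : ∀ K : Set (EuclideanSpace ℝ (Fin p)), IsCompact K → (A ∩ K).Finite)
    {r s : ℝ} (hs : 0 < s) (hsr : 2*s ≤ r)
    (hsep : ∀ u ∈ A, ∀ v ∈ A, ‖u - v‖ ≤ r → u = v) (x : EuclideanSpace ℝ (Fin p)) :
    (∑ᶠ a ∈ A, tent p s (x + a)) = 0 ∨
      ∃ b ∈ A, ‖x + b‖ < s ∧ (∑ᶠ a ∈ A, tent p s (x + a)) = tent p s (x + b) := by
  have hfin := sum_support_finite A hA hs x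
  rcases Set.eq_empty_or_nonempty (A ∩ Function.support (fun a => tent p s (x + a))) with he | hne
  · left
    rw [finsum_mem_eq_sum _ hfin]
    have : hfin.toFinset = ∅ := by simp [he]
    rw [this, Finset.sum_empty]
  · right
    obtain ⟨b, hbA, hbs⟩ := hne
    have hxb : ‖x + b‖ < s := tent_support hs hbs
    refine ⟨b, hbA, hxb, ?_⟩
    have hset : A ∩ Function.support (fun a => tent p s (x + a)) = {b} := by
      apply Set.eq_singleton_iff_unique_mem.mpr
      refine ⟨⟨hbA, hbs⟩, ?_⟩
      rintro b' ⟨hb'A, hb's⟩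
      have hxb' : ‖x + b'‖ < s := tent_support hs hb's
      refine hsep b' hb'A b hbA ?_
      have : b' - b = (x + b') - (x + b) := by abel
      rw [this]
      calc ‖(x + b') - (x + b)‖ ≤ ‖x + b'‖ + ‖x + b‖ := norm_sub_le _ _
      _ ≤ r := by linarith
    rw [finsum_mem_eq_sum _ hfin]
    have : hfin.toFinset = {b} := by
      ext y; simp [Set.Finite.mem_toFinset, hset]
    rw [this, Finset.sum_singleton]

lemma sum_at_mem (A : Set (EuclideanSpace ℝ (Fin p)))
    (hA : ∀ K : Set (EuclideanSpace ℝ (Fin p)), IsCompact K → (A ∩ K).Finite)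
    {r s : ℝ} (hs : 0 < s) (hsr : 2*s ≤ r)
    (hsep : ∀ u ∈ A, ∀ v ∈ A, ‖u - v‖ ≤ r → u = v) {a : EuclideanSpace ℝ (Fin p)}
    (ha : a ∈ A) : (∑ᶠ b ∈ A, tent p s (-a + b)) = 1 := by
  rcases sum_dichotomy A hA hs hsr hsep (-a) with h | ⟨b, hbA, hbs, h⟩
  · exfalso
    have hfin := sum_support_finite A hA hs (-a)
    rw [finsum_mem_eq_sum _ hfin] at h
    have hmem : a ∈ hfin.toFinset := by
      simp only [Set.Finite.mem_toFinset, Set.mem_inter_iff, Function.mem_support]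
      exact ⟨ha, by simp [tent_zero]⟩
    have := Finset.sum_eq_zero_iff_of_nonneg (fun i _ => tent_nonneg) |>.mp h a hmem
    simp [tent_zero] at this
  · have : b = a := by
      refine hsep b hbA a ha ?_
      have : b - a = -a + b := by abel
      rw [this]
      linarith
    rw [h, this]
    simp [tent_zero]

lemma exists_sep (D : Set (EuclideanSpace ℝ (Fin p)))
    (hD : ∀ K : Set (EuclideanSpace ℝ (Fin p)), IsCompact K → (D ∩ K).Finite) (c : ℝ) :
    ∃ γ > 0, ∀ x ∈ D ∩ Metric.closedBall 0 c, ∀ y ∈ D ∩ Metric.closedBall 0 c,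
      ‖x - y‖ < γ → x = y := by
  classical
  set S := (hD (Metric.closedBall 0 c) (isCompact_closedBall _ _)).toFinset with hS
  set P := ((S ×ˢ S).filter fun q => q.1 ≠ q.2).image (fun q => ‖q.1 - q.2‖) with hP
  set Q := insert (1:ℝ) P with hQ
  have hQne : Q.Nonempty := Finset.insert_nonempty _ _
  refine ⟨Q.min' hQne, ?_, ?_⟩
  · have hm := Q.min'_mem hQne
    rcases Finset.mem_insert.mp hm with h | h
    · rw [h]; norm_num
    · simp only [hP, Finset.mem_image, Finset.mem_filter] at h
      obtain ⟨q, ⟨_, hne⟩, hq⟩ := h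
      rw [← hq]
      exact norm_pos_iff.mpr (sub_ne_zero_of_ne hne)
  · intro x hx y hy hlt
    by_contra hne
    have hxS : x ∈ S := by rw [hS]; simpa [Set.Finite.mem_toFinset] using hx
    have hyS : y ∈ S := by rw [hS]; simpa [Set.Finite.mem_toFinset] using hy
    have hmem : ‖x - y‖ ∈ Q := by
      rw [hQ]
      refine Finset.mem_insert_of_mem ?_
      rw [hP]
      exact Finset.mem_image.mpr ⟨(x, y), Finset.mem_filter.mpr
        ⟨Finset.mem_product.mpr ⟨hxS, hyS⟩, hne⟩, rfl⟩
    exact absurd (Q.min'_le _ hmem) (not_le.mpr hlt)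

lemma exists_unif_disc (A : Set (EuclideanSpace ℝ (Fin p)))
    (hft : ∀ K : Set (EuclideanSpace ℝ (Fin p)), IsCompact K → ((A - A) ∩ K).Finite) :
    ∃ r : ℝ, 0 < r ∧ r ≤ 1 ∧ ∀ u ∈ A, ∀ v ∈ A, ‖u - v‖ ≤ r → u = v := by
  obtain ⟨γ, hγ, hsep⟩ := exists_sep (A - A) hft 1
  refine ⟨min (γ/3) (1/2), by positivity, min_le_of_right_le (by norm_num), ?_⟩
  intro u hu v hv huv
  have h1 : u - v ∈ (A - A) ∩ Metric.closedBall 0 1 := by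
    refine ⟨Set.sub_mem_sub hu hv, ?_⟩
    simp only [Metric.mem_closedBall, dist_zero_right]
    calc ‖u - v‖ ≤ min (γ/3) (1/2) := huv
    _ ≤ 1 := min_le_of_right_le (by norm_num)
  have h2 : v - u ∈ (A - A) ∩ Metric.closedBall 0 1 := by
    refine ⟨Set.sub_mem_sub hv hu, ?_⟩
    simp only [Metric.mem_closedBall, dist_zero_right]
    rw [norm_sub_rev]
    calc ‖u - v‖ ≤ min (γ/3) (1/2) := huv
    _ ≤ 1 := min_le_of_right_le (by norm_num)
  have : u - v = v - u := by
    refine hsep _ h1 _ h2 ?_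
    have : ‖u - v - (v - u)‖ ≤ 2 * ‖u - v‖ := by
      have : u - v - (v - u) = (u - v) + (u - v) := by abel
      rw [this]
      calc ‖(u-v) + (u-v)‖ ≤ ‖u-v‖ + ‖u-v‖ := norm_add_le _ _
      _ = 2 * ‖u-v‖ := by ring
    have h3 : ‖u - v‖ ≤ γ/3 := le_trans huv (min_le_left _ _)
    linarith
  have : u - v = 0 := by
    have h := sub_eq_zero.mpr this.symm
    have : (2:ℝ) • (u - v) = 0 := by
      rw [two_smul]
      have : v - u - (u - v) = 0 := h
      have h2 : u - v + (u - v) = -(v - u - (u - v)) + 0 := by abel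
      rw [h2, this]; simp
    have := smul_eq_zero.mp this
    rcases this with h | h
    · norm_num at h
    · exact h
  exact sub_eq_zero.mp this

end AuxCrystal

/-- If the convolution of the counting measure of a discrete set `A` with every
continuous compactly supported function is Bohr almost periodic, and `A - A` is
discrete, then `A` is an ideal crystal. -/
theorem discrete_weakAP_finiteType_isIdealCrystal {p : ℕ}
    (A : Set (EuclideanSpace ℝ (Fin p)))
    (hdisc : DiscreteSet A)
    (hap : ∀ φ : EuclideanSpace ℝ (Fin p) → ℝ, Continuous φ → HasCompactSupport φ →
      BohrAlmostPeriodic (fun x => ∑ᶠ a ∈ A, φ (x + a)))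
    (hft : DiscreteSet (A - A)) :
    ∃ (L F : Set (EuclideanSpace ℝ (Fin p))),
      IsFullRankLattice L ∧ F.Finite ∧ A = L + F := by
  classical
  rcases Set.eq_empty_or_nonempty A with hAe | ⟨a₀, ha₀⟩
  · -- A is empty : take the standard lattice and F = ∅
    set T : Fin p → EuclideanSpace ℝ (Fin p) :=
      fun i => (EuclideanSpace.basisFun (Fin p) ℝ).toBasis i with hT
    refine ⟨{x | ∃ n : Fin p → ℤ, x = ∑ i, (n i : ℝ) • T i}, ∅,
      ⟨T, (EuclideanSpace.basisFun (Fin p) ℝ).toBasis.linearIndependent, rfl⟩,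
      Set.finite_empty, ?_⟩
    rw [Set.add_empty]
    exact hAe
  -- main case
  obtain ⟨r, hr, hr1, hsep⟩ := exists_unif_disc A hft.2
  set s : ℝ := r/2 with hs_def
  have hs : 0 < s := by positivity
  have hsr : 2*s ≤ r := by rw [hs_def]; linarith
  set f : EuclideanSpace ℝ (Fin p) → ℝ := fun x => ∑ᶠ a ∈ A, tent p s (x + a) with hf_def
  obtain ⟨hf_cont, hf_ap⟩ := hap (tent p s) tent_continuous (tent_hcs hs)
  have hfval : ∀ a ∈ A, f (-a) = 1 := fun a ha => sum_at_mem A hdisc.2 hs hsr hsep ha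
  -- key extraction from an ε-Bohr translation
  have key : ∀ ε : ℝ, 0 < ε → ε ≤ 1 → ∀ τ : EuclideanSpace ℝ (Fin p),
      (∀ x, |f (x + τ) - f x| < ε) →
      (∀ a ∈ A, ∃ b ∈ A, ‖b - a + τ‖ < s*ε) ∧ (∀ a ∈ A, ∃ c ∈ A, ‖c - a - τ‖ < s*ε) := by
    intro ε hε hε1 τ hτ
    have main : ∀ y : EuclideanSpace ℝ (Fin p), 1 - ε < f y →
        ∃ b ∈ A, ‖y + b‖ < s * ε := by
      intro y hy
      change 1 - ε < ∑ᶠ a ∈ A, tent p s (y + a) at hy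
      rcases sum_dichotomy A hdisc.2 hs hsr hsep y with h | ⟨b, hbA, _, h⟩
      · rw [h] at hy; linarith
      · refine ⟨b, hbA, tent_norm_lt hs hε1 ?_⟩
        rw [h] at hy; exact hy
    constructor
    · intro a ha
      have h1 := hτ (-a)
      rw [hfval a ha] at h1
      have : 1 - ε < f (-a + τ) := by
        rcases abs_lt.mp h1 with ⟨hl, _⟩; linarith
      obtain ⟨b, hbA, hb⟩ := main _ this
      exact ⟨b, hbA, by rwa [show (-a + τ) + b = b - a + τ by abel] at hb⟩
    · intro a ha
      have h1 := hτ (-a - τ)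
      rw [show (-a - τ) + τ = -a by abel, hfval a ha] at h1
      have : 1 - ε < f (-a - τ) := by
        rcases abs_lt.mp h1 with ⟨hl, _⟩; linarith
      obtain ⟨c, hcA, hc⟩ := main _ this
      exact ⟨c, hcA, by rwa [show (-a - τ) + c = c - a - τ by abel] at hc⟩
  -- relative density of A
  obtain ⟨ρ, hρ1, hρ⟩ : ∃ ρ : ℝ, 1 ≤ ρ ∧ ∀ x, ∃ a ∈ A, ‖a - x‖ ≤ ρ := by
    obtain ⟨R₁, hR₁⟩ := hf_ap 1 one_pos
    refine ⟨|R₁| + s + 1, by have := abs_nonneg R₁; linarith, ?_⟩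
    intro x
    obtain ⟨τ, hτS, hτd⟩ := hR₁ (x - a₀)
    obtain ⟨-, key2⟩ := key 1 one_pos le_rfl τ hτS
    obtain ⟨c, hcA, hc⟩ := key2 a₀ ha₀
    refine ⟨c, hcA, ?_⟩
    have hd : ‖x - a₀ - τ‖ ≤ |R₁| := le_trans hτd (le_abs_self _)
    calc ‖c - x‖ = ‖(c - a₀ - τ) - (x - a₀ - τ)‖ := by congr 1; abel
    _ ≤ ‖c - a₀ - τ‖ + ‖x - a₀ - τ‖ := norm_sub_le _ _
    _ ≤ s * 1 + |R₁| := by have := hc.le; linarith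
    _ ≤ |R₁| + s + 1 := by linarith
  set c₀ : ℝ := 2*ρ + 1 with hc₀
  obtain ⟨γ, hγpos, hγ⟩ := exists_sep (A - A) hft.2 (c₀ + 1)
  set δ : ℝ := min (γ/3) (min (s/2) (1/2)) with hδ_def
  have hδpos : 0 < δ := by positivity
  have hδγ : 2*δ < γ := by
    have := min_le_left (γ/3) (min (s/2) (1/2)); linarith
  have hδs : 2*δ ≤ s := by
    have := le_trans (min_le_right (γ/3) _) (min_le_left (s/2) (1/2)); linarith
  have hδ1 : 2*δ ≤ 1 := by
    have := le_trans (min_le_right (γ/3) _) (min_le_right (s/2) (1/2)); linarith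
  set ε : ℝ := δ / s with hε_def
  have hε : 0 < ε := by positivity
  have hε1 : ε ≤ 1 := by
    rw [hε_def, div_le_one hs]; linarith
  have hsε : s * ε = δ := by rw [hε_def]; field_simp
  obtain ⟨R, hR⟩ := hf_ap ε hε
  -- every Bohr ε-translation is δ-close to an exact period
  have period : ∀ τ : EuclideanSpace ℝ (Fin p), (∀ x, |f (x + τ) - f x| < ε) →
      ∃ t, (∀ x, x + t ∈ A ↔ x ∈ A) ∧ ‖t + τ‖ < δ := by
    intro τ hτ
    obtain ⟨key1, key2⟩ := key ε hε hε1 τ hτ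
    choose g hgA hgd using key1
    -- the base step : points at distance ≤ c₀ have the same displacement
    have hbase : ∀ a, ∀ ha : a ∈ A, ∀ b, ∀ hb : b ∈ A, ‖a - b‖ ≤ c₀ →
        g a ha - a = g b hb - b := by
      intro a ha b hb hab
      have hu : a - b ∈ (A - A) ∩ Metric.closedBall 0 (c₀ + 1) := by
        refine ⟨Set.sub_mem_sub ha hb, ?_⟩
        simp only [Metric.mem_closedBall, dist_zero_right]
        linarith
      have hdiff : ‖(g a ha - g b hb) - (a - b)‖ ≤ 2*δ := by
        have h1 := (hgd a ha).le
        have h2 := (hgd b hb).le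
        rw [hsε] at h1 h2
        have he : (g a ha - g b hb) - (a - b) = (g a ha - a + τ) - (g b hb - b + τ) := by abel
        rw [he]
        calc ‖(g a ha - a + τ) - (g b hb - b + τ)‖
            ≤ ‖g a ha - a + τ‖ + ‖g b hb - b + τ‖ := norm_sub_le _ _
        _ ≤ 2*δ := by linarith
      have hu' : g a ha - g b hb ∈ (A - A) ∩ Metric.closedBall 0 (c₀ + 1) := by
        refine ⟨Set.sub_mem_sub (hgA a ha) (hgA b hb), ?_⟩
        simp only [Metric.mem_closedBall, dist_zero_right]
        have h9 : ((g a ha - g b hb) - (a - b)) + (a - b) = g a ha - g b hb := by abel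
        have h10 := norm_add_le ((g a ha - g b hb) - (a - b)) (a - b)
        rw [h9] at h10
        linarith
      have := hγ _ hu' _ hu (by linarith [hdiff])
      have h3 : g a ha - g b hb = a - b := this
      have : g a ha - a = (g a ha - g b hb) - (a - b) + (g b hb - b) := by abel
      rw [this, h3]
      abel
    -- chain step
    have hchain : ∀ n : ℕ, ∀ a, ∀ ha : a ∈ A, ∀ b, ∀ hb : b ∈ A, ‖a - b‖ ≤ c₀ + n →
        g a ha - a = g b hb - b := by
      intro n
      induction n with
      | zero => intro a ha b hb hab; exact hbase a ha b hb (by push_cast at hab; linarith)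
      | succ n ih =>
        intro a ha b hb hab
        rcases le_or_gt ‖a - b‖ c₀ with h | h
        · exact hbase a ha b hb h
        · set L : ℝ := ‖a - b‖ with hL
          have hL0 : 0 < L := by have h20 : (0:ℝ) < c₀ := by rw [hc₀]; linarith
                                 linarith
          set m : EuclideanSpace ℝ (Fin p) := b + ((ρ+1)/L) • (a - b) with hm
          obtain ⟨c, hcA, hcm⟩ := hρ m
          have hLbig : ρ + 1 ≤ L := by rw [hc₀] at h; linarith
          have hmb : ‖m - b‖ = ρ + 1 := by
            have h11 : m - b = ((ρ+1)/L) • (a - b) := by rw [hm]; abel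
            have h12 : ‖m - b‖ = |(ρ+1)/L| * ‖a - b‖ := by
              rw [h11, norm_smul, Real.norm_eq_abs]
            rw [h12, ← hL, abs_of_nonneg (by positivity : (0:ℝ) ≤ (ρ+1)/L)]
            field_simp
          have hma : ‖m - a‖ = L - (ρ + 1) := by
            have h11 : m - a = ((ρ+1)/L - 1) • (a - b) := by rw [hm]; module
            have h12 : ‖m - a‖ = |(ρ+1)/L - 1| * ‖a - b‖ := by
              rw [h11, norm_smul, Real.norm_eq_abs]
            rw [h12, ← hL, abs_of_nonpos (by
              rw [sub_nonpos, div_le_one hL0]; exact hLbig)]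
            field_simp; ring
          have hcb : ‖c - b‖ ≤ c₀ := by
            rw [hc₀]
            calc ‖c - b‖ ≤ ‖c - m‖ + ‖m - b‖ := by
                  have : c - b = (c - m) + (m - b) := by abel
                  rw [this]; exact norm_add_le _ _
            _ ≤ ρ + (ρ + 1) := by rw [hmb]; linarith [hcm]
            _ = 2*ρ + 1 := by ring
          have hca : ‖a - c‖ ≤ c₀ + n := by
            have h13 : (a - m) + (m - c) = a - c := by abel
            have h14 := norm_add_le (a - m) (m - c)
            rw [h13, norm_sub_rev a m, hma, norm_sub_rev m c] at h14
            push_cast at hab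
            push_cast
            linarith [hcm]
          have h1 := ih a ha c hcA hca
          have h2 := hbase c hcA b hb hcb
          rw [h1, h2]
    set t : EuclideanSpace ℝ (Fin p) := g a₀ ha₀ - a₀ with ht_def
    have hconst : ∀ a, ∀ ha : a ∈ A, g a ha = a + t := by
      intro a ha
      have hn : ‖a - a₀‖ ≤ c₀ + (⌈‖a - a₀‖⌉₊ : ℕ) := by
        have := Nat.le_ceil ‖a - a₀‖
        have hc : (0:ℝ) ≤ c₀ := by rw [hc₀]; linarith
        push_cast
        linarith
      have := hchain ⌈‖a - a₀‖⌉₊ a ha a₀ ha₀ hn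
      rw [ht_def, ← this]; abel
    have htτ : ‖t + τ‖ < δ := by
      have := hgd a₀ ha₀
      rw [hconst a₀ ha₀, hsε] at this
      rwa [show a₀ + t - a₀ + τ = t + τ by abel] at this
    refine ⟨t, fun x => ⟨?_, ?_⟩, htτ⟩
    · -- x + t ∈ A → x ∈ A
      intro hx
      obtain ⟨c, hcA, hc⟩ := key2 (x + t) hx
      have hgc := hgd c hcA
      rw [hconst c hcA, hsε] at hgc
      have : c + t = x + t := by
        refine hsep _ (by rw [← hconst c hcA]; exact hgA c hcA) _ hx ?_
        rw [hsε] at hc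
        have he : c + t - (x + t) = (c + t - c + τ) + (c - (x + t) - τ) := by abel
        rw [he]
        have hsr2 : s ≤ r := by rw [hs_def]; linarith
        calc ‖(c + t - c + τ) + (c - (x + t) - τ)‖
            ≤ ‖c + t - c + τ‖ + ‖c - (x + t) - τ‖ := norm_add_le _ _
        _ ≤ r := by have := hc.le; have := hgc.le; linarith
      have : c = x := by
        have := add_right_cancel this; exact this
      rwa [← this]
    · -- x ∈ A → x + t ∈ A
      intro hx
      have := hgA x hx
      rwa [hconst x hx] at this
  -- the set of exact periods
  set Gset : Set (EuclideanSpace ℝ (Fin p)) := {t | ∀ x, x + t ∈ A ↔ x ∈ A} with hGset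
  have hG0 : (0 : EuclideanSpace ℝ (Fin p)) ∈ Gset := fun x => by simp
  have hGadd : ∀ t₁ ∈ Gset, ∀ t₂ ∈ Gset, t₁ + t₂ ∈ Gset := by
    intro t₁ h₁ t₂ h₂
    intro x
    have he : x + (t₁ + t₂) = (x + t₂) + t₁ := by abel
    rw [he]
    exact (h₁ (x + t₂)).trans (h₂ x)
  have hGneg : ∀ t ∈ Gset, -t ∈ Gset := by
    intro t h
    intro x
    have h2 := h (x + -t)
    rw [show x + -t + t = x by abel] at h2
    exact h2.symm
  -- relative density of the period set
  have hGdense : ∀ x : EuclideanSpace ℝ (Fin p), ∃ t ∈ Gset, dist x t ≤ R + δ := by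
    intro x
    obtain ⟨τ, hτS, hτd⟩ := hR (-x)
    obtain ⟨t, htG, htτ⟩ := period τ hτS
    refine ⟨t, htG, ?_⟩
    rw [dist_eq_norm]
    have he : x - t = -(t + τ) + (x + τ) := by abel
    rw [he]
    have hd : ‖x + τ‖ ≤ R := by
      have h3 : dist (-x) τ = ‖x + τ‖ := by
        rw [dist_eq_norm, show -x - τ = -(x + τ) by abel, norm_neg]
      rw [h3] at hτd
      exact hτd
    calc ‖-(t + τ) + (x + τ)‖ ≤ ‖-(t + τ)‖ + ‖x + τ‖ := norm_add_le _ _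
    _ = ‖t + τ‖ + ‖x + τ‖ := by rw [norm_neg]
    _ ≤ R + δ := by linarith [htτ.le]
  set G : AddSubgroup (EuclideanSpace ℝ (Fin p)) :=
    { carrier := Gset
      add_mem' := fun ha hb => hGadd _ ha _ hb
      zero_mem' := hG0
      neg_mem' := fun ha => hGneg _ ha } with hG
  set Lsub : Submodule ℤ (EuclideanSpace ℝ (Fin p)) := AddSubgroup.toIntSubmodule G with hLsub
  have hmemL : ∀ t : EuclideanSpace ℝ (Fin p), t ∈ Lsub ↔ (∀ x, x + t ∈ A ↔ x ∈ A) := by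
    intro t
    exact Iff.rfl
  have hLr : ∀ t ∈ Lsub, ‖t‖ ≤ r → t = 0 := by
    intro t ht hnorm
    have h1 : a₀ + t ∈ A := ((hmemL t).mp ht a₀).mpr ha₀
    have h2 : a₀ + t = a₀ :=
      hsep (a₀ + t) h1 a₀ ha₀ (by rw [show a₀ + t - a₀ = t by abel]; exact hnorm)
    have := add_eq_left.mp h2
    exact this
  haveI hdisc_top : DiscreteTopology Lsub := by
    apply discreteTopology_of_isOpen_singleton_zero
    have hset : ({0} : Set Lsub) = (Subtype.val) ⁻¹' (Metric.ball (0 : EuclideanSpace ℝ (Fin p)) r) := by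
      ext ⟨t, ht⟩
      simp only [Set.mem_singleton_iff, Set.mem_preimage, Metric.mem_ball, dist_zero_right]
      constructor
      · intro h0
        have h1 : t = 0 := by simpa using Subtype.ext_iff.mp h0
        rw [h1]
        simpa using hr
      · intro hlt
        exact Subtype.ext (hLr t ht hlt.le)
    rw [hset]
    exact (Metric.isOpen_ball).preimage continuous_subtype_val
  haveI hzl : IsZLattice ℝ Lsub := by
    refine ⟨?_⟩
    by_contra hne
    set V := Submodule.span ℝ (Lsub : Set (EuclideanSpace ℝ (Fin p))) with hV
    have hVbot : Vᗮ ≠ ⊥ := fun hbot => hne (Submodule.orthogonal_eq_bot_iff.mp hbot)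
    obtain ⟨v, hvV, hv0⟩ := Submodule.exists_mem_ne_zero_of_ne_bot hVbot
    set w : EuclideanSpace ℝ (Fin p) := (‖v‖⁻¹ : ℝ) • v with hw
    have hw1 : ‖w‖ = 1 := norm_smul_inv_norm hv0
    have hwV : w ∈ Vᗮ := Submodule.smul_mem _ _ hvV
    obtain ⟨t, htG, htd⟩ := hGdense ((R + δ + 1) • w)
    have htV : t ∈ V := Submodule.subset_span (by
      rw [SetLike.mem_coe, hmemL t]
      exact htG)
    have hip : (inner ℝ t w : ℝ) = 0 := (Submodule.mem_orthogonal _ _).mp hwV t htV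
    have hxw : (inner ℝ ((R + δ + 1) • w - t) w : ℝ) = R + δ + 1 := by
      rw [inner_sub_left, real_inner_smul_left, hip, sub_zero,
        real_inner_self_eq_norm_sq, hw1]
      ring
    have hle := real_inner_le_norm ((R + δ + 1) • w - t) w
    rw [hxw, hw1, mul_one] at hle
    rw [dist_eq_norm] at htd
    linarith
  have hrank : Module.finrank ℤ Lsub = p := by
    rw [ZLattice.rank ℝ Lsub, finrank_euclideanSpace_fin]
  set b : Module.Basis (Fin p) ℤ Lsub := Module.finBasisOfFinrankEq ℤ Lsub hrank with hb
  set B : Module.Basis (Fin p) ℝ (EuclideanSpace ℝ (Fin p)) := b.ofZLatticeBasis ℝ Lsub with hB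
  have hspan : Submodule.span ℤ (Set.range B) = Lsub := b.ofZLatticeBasis_span ℝ
  refine ⟨(Lsub : Set (EuclideanSpace ℝ (Fin p))), A ∩ ZSpan.fundamentalDomain B,
    ⟨fun i => B i, B.linearIndependent, ?_⟩, ?_, ?_⟩
  · -- the lattice has the required form
    ext x
    simp only [SetLike.mem_coe, Set.mem_setOf_eq]
    rw [← hspan]
    rw [Submodule.mem_span_range_iff_exists_fun]
    constructor
    · rintro ⟨c, hc⟩
      refine ⟨c, ?_⟩
      rw [← hc]
      refine Finset.sum_congr rfl fun i _ => ?_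
      rw [Int.cast_smul_eq_zsmul]
    · rintro ⟨n, rfl⟩
      refine ⟨n, ?_⟩
      refine Finset.sum_congr rfl fun i _ => ?_
      rw [Int.cast_smul_eq_zsmul]
  · -- F is finite
    obtain ⟨M, hM⟩ := (ZSpan.fundamentalDomain_isBounded B).subset_closedBall 0
    exact (hdisc.2 (Metric.closedBall 0 M) (isCompact_closedBall _ _)).subset
      (fun x hx => ⟨hx.1, hM hx.2⟩)
  · -- A = L + F
    ext x
    constructor
    · intro hx
      have hfloor : (ZSpan.floor B x : EuclideanSpace ℝ (Fin p)) ∈ Lsub := by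
        rw [← hspan]
        exact (ZSpan.floor B x).2
      have hfG : ∀ y, y + (ZSpan.floor B x : EuclideanSpace ℝ (Fin p)) ∈ A ↔ y ∈ A :=
        (hmemL _).mp hfloor
      have hsum : ZSpan.fract B x + (ZSpan.floor B x : EuclideanSpace ℝ (Fin p)) = x := by
        rw [ZSpan.fract_apply]
        abel
      have hfractA : ZSpan.fract B x ∈ A := by
        have := hfG (ZSpan.fract B x)
        rw [hsum] at this
        exact this.mp hx
      refine Set.mem_add.mpr ⟨(ZSpan.floor B x : EuclideanSpace ℝ (Fin p)), hfloor,
        ZSpan.fract B x, ⟨hfractA, ZSpan.fract_mem_fundamentalDomain B x⟩, ?_⟩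
      rw [add_comm]
      exact hsum
    · intro hx
      obtain ⟨g, hg, ff, hf, hsum⟩ := Set.mem_add.mp hx
      have := ((hmemL g).mp hg ff).mpr hf.1
      rwa [add_comm ff g, hsum] at this
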